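/- With L and v as above (L(e_n⊗e_k) = ((q²;q²)_∞/(q²;q²)_n)^{1/2} e_n⊗e_k, v = S*⊗1, a, b the SU_q(2) generators on ℓ²(ℕ)⊗ℓ²(ℤ)), for every n ∈ ℕ one has La^n = v^n L (b*b; q⁻²)_n, where (x;q⁻²)_n = Π_{k=0}^{n−1}(1 − q^{−2k}x). -/

import Mathlib

open ContinuousLinearMap

/-- `(q²;q²)_n = ∏_{j=1}^n (1-q^{2j})`. -/
noncomputable def qPochN (q : ℝ) (n : ℕ) : ℝ := ∏ j ∈ Finset.range n, (1 - q ^ (2 * (j + 1)))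

/-- `(q²;q²)_∞ = ∏_{j≥1} (1-q^{2j})`. -/
noncomputable def qPochInf (q : ℝ) : ℝ := ∏' j : ℕ, (1 - q ^ (2 * (j + 1)))

lemma hilbert_ext {H : Type*} [NormedAddCommGroup H] [InnerProductSpace ℂ H]
    {ι : Type*} (e : HilbertBasis ι ℂ H) {x y : H}
    (h : ∀ i, (inner ℂ (e i) x : ℂ) = inner ℂ (e i) y) : x = y := by
  apply e.repr.injective
  apply lp.ext
  funext i
  rw [e.repr_apply_apply, e.repr_apply_apply, h]

lemma sqrt_prod (n : ℕ) (f : ℕ → ℝ) (hf : ∀ i, 0 ≤ f i) :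
    ∏ i ∈ Finset.range n, Real.sqrt (f i) = Real.sqrt (∏ i ∈ Finset.range n, f i) := by
  induction n with
  | zero => simp
  | succ n ih =>
    rw [Finset.prod_range_succ, Finset.prod_range_succ, ih,
      Real.sqrt_mul (Finset.prod_nonneg fun i _ => hf i)]

theorem L_aPow_commutation (q : ℝ) (hq0 : 0 < q) (hq1 : q < 1)
    {H₁ H₂ : Type*} [NormedAddCommGroup H₁] [InnerProductSpace ℂ H₁] [CompleteSpace H₁]
    [NormedAddCommGroup H₂] [InnerProductSpace ℂ H₂] [CompleteSpace H₂]
    (e : HilbertBasis (ℕ × ℤ) ℂ H₁) (e₂ : HilbertBasis (ℤ × ℤ) ℂ H₂)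
    (a b : H₁ →L[ℂ] H₁) (L : H₁ →L[ℂ] H₂) (v : H₂ →L[ℂ] H₂)
    (ha0 : ∀ m : ℤ, a (e (0, m)) = 0)
    (ha : ∀ (k : ℕ) (m : ℤ), a (e (k + 1, m)) =
      ((Real.sqrt (1 - q ^ (2 * (k + 1))) : ℝ) : ℂ) • e (k, m))
    (hb : ∀ (k : ℕ) (m : ℤ), b (e (k, m)) = ((q ^ k : ℝ) : ℂ) • e (k, m + 1))
    (hL : ∀ (n : ℕ) (k : ℤ), L (e (n, k)) =
      ((Real.sqrt (qPochInf q / qPochN q n) : ℝ) : ℂ) • e₂ ((n : ℤ), k))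
    (hv : ∀ m k : ℤ, v (e₂ (m, k)) = e₂ (m - 1, k)) :
    ∀ n : ℕ, L.comp (a ^ n) = ((v ^ n).comp L).comp
      (((List.range n).map fun k =>
        (1 : H₁ →L[ℂ] H₁) - (((q : ℂ) ^ (2 * k))⁻¹) • (adjoint b * b)).prod) := by
  have hq0' : (q : ℂ) ≠ 0 := by exact_mod_cast hq0.ne'
  -- adjoint b
  have hbadj : ∀ (k : ℕ) (m : ℤ), adjoint b (e (k, m)) = ((q ^ k : ℝ) : ℂ) • e (k, m - 1) := by
    intro k m
    apply hilbert_ext e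
    rintro ⟨j, l⟩
    rw [adjoint_inner_right, hb, inner_smul_left, inner_smul_right]
    have horth := e.orthonormal
    rw [orthonormal_iff_ite] at horth
    rw [horth, horth]
    by_cases h : ((j, l) : ℕ × ℤ) = (k, m - 1)
    · have h1 : ((j, l + 1) : ℕ × ℤ) = (k, m) := by
        rw [Prod.ext_iff] at h ⊢
        exact ⟨h.1, by omega⟩
      rw [Prod.ext_iff] at h
      simp only [h1, if_true, Complex.conj_ofReal]
      rw [if_pos (Prod.ext_iff.mpr h)]
      obtain ⟨h1', -⟩ := h
      subst h1'
      rfl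
    · have h1 : ((j, l + 1) : ℕ × ℤ) ≠ (k, m) := by
        intro hc; apply h
        rw [Prod.ext_iff] at hc ⊢
        exact ⟨hc.1, by omega⟩
      simp [h1, h]
  -- b* b
  have hbb : ∀ (k : ℕ) (m : ℤ), (adjoint b * b) (e (k, m)) = ((q : ℂ) ^ (2 * k)) • e (k, m) := by
    intro k m
    rw [mul_apply_eq_comp, hb, map_smul, hbadj, smul_smul, add_sub_cancel_right]
    congr 1
    push_cast
    ring
  -- the Pochhammer product applied to a basis vector
  have hP : ∀ (n : ℕ) (k : ℕ) (m : ℤ),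
      (((List.range n).map fun k =>
        (1 : H₁ →L[ℂ] H₁) - (((q : ℂ) ^ (2 * k))⁻¹) • (adjoint b * b)).prod) (e (k, m))
      = (∏ i ∈ Finset.range n, (1 - (q : ℂ) ^ (2 * k) * ((q : ℂ) ^ (2 * i))⁻¹)) • e (k, m) := by
    intro n k m
    induction n with
    | zero => simp
    | succ n ih =>
      rw [List.range_succ, List.map_append, List.prod_append, List.map_cons, List.map_nil,
        List.prod_cons, List.prod_nil, mul_one, mul_apply_eq_comp, sub_apply, one_apply_eq_self, smul_apply,
        hbb, smul_smul, map_sub, map_smul, ih, Finset.prod_range_succ, smul_smul, ← sub_smul]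
      congr 1
      ring
  -- powers of a
  have haPow : ∀ (n j : ℕ) (m : ℤ), (a ^ n) (e (j + n, m)) =
      ((∏ i ∈ Finset.range n, Real.sqrt (1 - q ^ (2 * (j + i + 1))) : ℝ) : ℂ) • e (j, m) := by
    intro n
    induction n with
    | zero => intro j m; simp
    | succ n ih =>
      intro j m
      rw [pow_succ, mul_apply_eq_comp]
      have : j + (n + 1) = (j + n) + 1 := by omega
      rw [this, ha, map_smul, ih, smul_smul, Finset.prod_range_succ]
      congr 1
      push_cast
      ring
  have haPow0 : ∀ (n j : ℕ) (m : ℤ), j < n → (a ^ n) (e (j, m)) = 0 := by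
    intro n
    induction n with
    | zero => omega
    | succ n ih =>
      intro j m hj
      rw [pow_succ, mul_apply_eq_comp]
      rcases j with _ | j
      · rw [ha0, map_zero]
      · rw [ha, map_smul, ih j m (by omega), smul_zero]
  -- powers of v
  have hvPow : ∀ (n : ℕ) (m k : ℤ), (v ^ n) (e₂ (m, k)) = e₂ (m - n, k) := by
    intro n
    induction n with
    | zero => intro m k; simp
    | succ n ih =>
      intro m k
      rw [pow_succ, mul_apply_eq_comp, hv, ih]
      congr 2
      push_cast; ring
  intro n
  apply ContinuousLinearMap.ext_on
    (Submodule.dense_iff_topologicalClosure_eq_top.2 e.dense_span)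
  rintro x ⟨⟨j, m⟩, rfl⟩
  simp only [comp_apply]
  rw [hP]
  rcases lt_or_ge j n with hj | hj
  · rw [haPow0 n j m hj, map_zero]
    rw [Finset.prod_eq_zero (Finset.mem_range.2 hj)]
    · simp
    · rw [mul_inv_cancel₀ (pow_ne_zero _ hq0'), sub_self]
  · obtain ⟨j', rfl⟩ : ∃ j', j = j' + n := ⟨j - n, by omega⟩
    have hcast : ((j' + n : ℕ) : ℤ) - (n : ℤ) = (j' : ℤ) := by push_cast; ring
    rw [haPow, map_smul]
    simp only [hL, map_smul, hvPow, hcast, smul_smul]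
    congr 1
    -- now a scalar identity in ℂ, reduce to ℝ
    have hA : ∀ i ∈ Finset.range n,
        (1 - (q : ℂ) ^ (2 * (j' + n)) * ((q : ℂ) ^ (2 * i))⁻¹)
          = ((1 - q ^ (2 * (j' + (n - 1 - i) + 1)) : ℝ) : ℂ) := by
      intro i hi
      have hi' : i < n := Finset.mem_range.1 hi
      push_cast
      rw [← pow_sub₀ _ hq0' (by omega)]
      congr 2
      omega
    rw [Finset.prod_congr rfl hA, ← Complex.ofReal_prod, ← Complex.ofReal_mul,
      ← Complex.ofReal_mul]
    congr 1
    rw [Finset.prod_range_reflect (fun i => (1 - q ^ (2 * (j' + i + 1)))) n]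
    -- real identity
    set A := ∏ i ∈ Finset.range n, (1 - q ^ (2 * (j' + i + 1))) with hAdef
    have hfac : ∀ (N : ℕ), 0 < 1 - q ^ (2 * (N + 1)) := by
      intro N
      have : q ^ (2 * (N + 1)) < 1 := pow_lt_one₀ hq0.le hq1 (by omega)
      linarith
    have hApos : 0 < A := Finset.prod_pos fun i _ => hfac _
    have hPpos : 0 < qPochN q j' := Finset.prod_pos fun i _ => hfac _
    have hsplit : qPochN q (j' + n) = qPochN q j' * A := by
      rw [qPochN, Finset.prod_range_add]
      rfl
    rw [sqrt_prod n _ (fun i => (hfac _).le), hsplit]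
    rw [show qPochInf q / (qPochN q j' * A) = qPochInf q / qPochN q j' * A⁻¹ by
      field_simp]
    rw [Real.sqrt_mul' _ (inv_nonneg.2 hApos.le), Real.sqrt_inv]
    have hAs : A * (Real.sqrt A)⁻¹ = Real.sqrt A := by
      nth_rewrite 1 [← Real.mul_self_sqrt hApos.le]
      exact mul_inv_cancel_right₀ (Real.sqrt_pos.2 hApos).ne' _
    rw [show A * (Real.sqrt (qPochInf q / qPochN q j') * (Real.sqrt A)⁻¹)
        = Real.sqrt (qPochInf q / qPochN q j') * (A * (Real.sqrt A)⁻¹) by ring, hAs,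
      ← hAdef, mul_comm]
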